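/- Let (E, ≤, ε) be a heap with pieces in P and concurrency relation 𝒞 whose concurrency subgraph contains no circuits, and let [a, b] be a minimal balanced subinterval of E. Let c ∈ S_{[a,b]}, let a′ be the minimal element of S_{[a,b]} with label ε(c), and let b′ be the maximal element of S_{[a,b]} with label ε(c). Then a < a′ and b′ < b are covering relations in E. -/

import Mathlib

/-- `ρ` is a rank function for the poset `E`:
it increases by exactly 1 along covering relations. -/
def IsRankFunction {E : Type*} [PartialOrder E] (ρ : E → ℤ) : Prop :=
  ∀ a b : E, a ⋖ b → ρ b = ρ a + 1

/-- A poset is ranked if it admits a rank function. -/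
def Ranked (E : Type*) [PartialOrder E] : Prop :=
  ∃ ρ : E → ℤ, IsRankFunction ρ

/-- Two elements lie in the same connected component of the poset: the
equivalence relation generated by the covering relation. -/
def SameComponent {E : Type*} [PartialOrder E] (a b : E) : Prop :=
  Relation.EqvGen (fun x y : E => x ⋖ y) a b

/-- The heap axioms for a labelling `ε : E → P` of a poset `E` with
concurrency relation `C` on the pieces `P`. -/
def IsHeap {E P : Type*} [PartialOrder E] (C : P → P → Prop) (ε : E → P) : Prop :=
  (∀ α β : E, C (ε α) (ε β) → α ≤ β ∨ β ≤ α) ∧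
  (∀ α β : E, α ≤ β ↔ Relation.TransGen (fun x y : E => x ≤ y ∧ C (ε x) (ε y)) α β)

/-- `[a, b]` is a minimal balanced subinterval: `a ≠ b`, `ε a = ε b`, and the
only elements of `[a, b]` with label `ε a` are `a` and `b`. -/
def MinBalanced {E P : Type*} [PartialOrder E] (ε : E → P) (a b : E) : Prop :=
  a < b ∧ ε a = ε b ∧ ∀ c ∈ Set.Icc a b, ε c = ε a → c = a ∨ c = b

/-- The set `S_{[a,b]}` of elements of `[a, b]` whose label is distinct from,
but concurrent with, the label of `a`. -/
def intervalS {E P : Type*} [PartialOrder E] (C : P → P → Prop) (ε : E → P)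
    (a b : E) : Set E :=
  {c | c ∈ Set.Icc a b ∧ ε c ≠ ε a ∧ C (ε a) (ε c)}

/-- The concurrency subgraph of the heap (the simple graph on the labels
occurring in `E`, with distinct labels adjacent iff concurrent) is acyclic. -/
def NoCircuits {E P : Type*} [PartialOrder E] (C : P → P → Prop) (ε : E → P) : Prop :=
  (SimpleGraph.fromRel (fun v w : Set.range ε => C v.1 w.1)).IsAcyclic

section HeapAux

variable {E P : Type*} [PartialOrder E] (C : P → P → Prop) (ε : E → P)

/-- The concurrency subgraph. -/
abbrev heapGraph : SimpleGraph (Set.range ε) :=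
  SimpleGraph.fromRel (fun v w : Set.range ε => C v.1 w.1)

/-- The vertex of the concurrency subgraph corresponding to an element. -/
def heapVtx (x : E) : Set.range ε := ⟨ε x, ⟨x, rfl⟩⟩

lemma heap_chain_le {u v : E}
    (h : Relation.TransGen (fun x y : E => x ≤ y ∧ C (ε x) (ε y)) u v) : u ≤ v := by
  induction h with
  | single h => exact h.1
  | tail _ h2 ih => exact ih.trans h2.1

lemma heap_step_walk {u v : E} (h : u ≤ v ∧ C (ε u) (ε v)) :
    ∃ w : (heapGraph C ε).Walk (heapVtx ε u) (heapVtx ε v),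
      ∀ p ∈ w.support, ∃ z : E, u ≤ z ∧ z ≤ v ∧ ε z = p.1 := by
  by_cases he : ε u = ε v
  · refine ⟨SimpleGraph.Walk.nil.copy rfl (Subtype.ext he), ?_⟩
    intro p hp
    rw [SimpleGraph.Walk.support_copy] at hp
    simp only [SimpleGraph.Walk.support_nil, List.mem_singleton] at hp
    exact ⟨u, le_refl u, h.1, by rw [hp]; rfl⟩
  · have hadj : (heapGraph C ε).Adj (heapVtx ε u) (heapVtx ε v) := by
      rw [SimpleGraph.fromRel_adj]
      exact ⟨fun hh => he (congrArg Subtype.val hh), Or.inl h.2⟩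
    refine ⟨hadj.toWalk, ?_⟩
    intro p hp
    simp only [SimpleGraph.Adj.toWalk, SimpleGraph.Walk.support_cons,
      SimpleGraph.Walk.support_nil, List.mem_cons, List.mem_singleton,
      List.not_mem_nil, or_false] at hp
    rcases hp with hp | hp
    · exact ⟨u, le_refl u, h.1, by rw [hp]; rfl⟩
    · exact ⟨v, h.1, le_refl v, by rw [hp]; rfl⟩

lemma heap_chain_walk {u v : E}
    (h : Relation.TransGen (fun x y : E => x ≤ y ∧ C (ε x) (ε y)) u v) :
    ∃ w : (heapGraph C ε).Walk (heapVtx ε u) (heapVtx ε v),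
      ∀ p ∈ w.support, ∃ z : E, u ≤ z ∧ z ≤ v ∧ ε z = p.1 := by
  induction h with
  | single h => exact heap_step_walk C ε h
  | tail h1 h2 ih =>
    obtain ⟨w1, hw1⟩ := ih
    obtain ⟨w2, hw2⟩ := heap_step_walk C ε h2
    refine ⟨w1.append w2, ?_⟩
    intro p hp
    rw [SimpleGraph.Walk.support_append] at hp
    rcases List.mem_append.mp hp with hp | hp
    · obtain ⟨z, hz1, hz2, hz3⟩ := hw1 p hp
      exact ⟨z, hz1, hz2.trans h2.1, hz3⟩
    · obtain ⟨z, hz1, hz2, hz3⟩ := hw2 p (List.mem_of_mem_tail hp)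
      exact ⟨z, (heap_chain_le C ε h1).trans hz1, hz2, hz3⟩

lemma heap_cov_half (hsymm : Symmetric C)
    (hheap : IsHeap C ε) (hacyclic : NoCircuits C ε)
    (a b : E) (hmb : MinBalanced ε a b)
    (a' : E) (ha'mem : a' ∈ intervalS C ε a b)
    (ha'min : ∀ d ∈ intervalS C ε a b, ε d = ε a' → a' ≤ d) :
    a ⋖ a' := by
  classical
  obtain ⟨⟨haa', ha'b⟩, ha'ne, ha'C⟩ := ha'mem
  have halt : a < a' := lt_of_le_of_ne haa' (fun h => ha'ne (congrArg ε h).symm)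
  refine ⟨halt, ?_⟩
  intro x hax hxa'
  have hxb : x < b := lt_of_lt_of_le hxa' ha'b
  -- base step : a ≤ y with concurrent labels, y strictly inside, gives an element of S
  have base : ∀ y : E, a ≤ y ∧ C (ε a) (ε y) → y ≤ b → y ≠ b → a ≠ y →
      ∃ s ∈ intervalS C ε a b, a < s ∧ s ≤ y := by
    intro y h hyb hyneb hane
    have hεy : ε y ≠ ε a := by
      intro he
      rcases hmb.2.2 y ⟨h.1, hyb⟩ he with h1 | h1
      · exact hane h1.symm
      · exact hyneb h1
    exact ⟨y, ⟨⟨h.1, hyb⟩, hεy, h.2⟩, lt_of_le_of_ne h.1 hane, le_refl y⟩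
  have key : ∀ y : E,
      Relation.TransGen (fun x y : E => x ≤ y ∧ C (ε x) (ε y)) a y →
      y ≤ b → y ≠ b → a ≠ y →
      ∃ s ∈ intervalS C ε a b, a < s ∧ s ≤ y := by
    intro y hy
    induction hy with
    | single h => exact base _ h
    | tail h1 h2 ih =>
      rename_i yy zz
      intro hzb hzneb hanez
      by_cases hay : a = yy
      · exact base zz (hay ▸ h2) hzb hzneb hanez
      · have hyz : yy ≤ zz := h2.1
        have hyneb : yy ≠ b := by
          intro hh
          exact hzneb (le_antisymm hzb (hh ▸ hyz))
        obtain ⟨s, hsS, has, hsy⟩ := ih (hyz.trans hzb) hyneb hay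
        exact ⟨s, hsS, has, hsy.trans hyz⟩
  obtain ⟨s, hsS, has, hsx⟩ :=
    key x ((hheap.2 a x).mp hax.le) hxb.le (ne_of_lt hxb) (ne_of_lt hax)
  have hsa' : s < a' := lt_of_le_of_lt hsx hxa'
  have hsc : ε s ≠ ε a' := fun h => lt_irrefl _ (lt_of_lt_of_le hsa' (ha'min s hsS h))
  -- a walk in the concurrency graph from ε s to ε a' avoiding ε a
  obtain ⟨w, hw⟩ := heap_chain_walk C ε ((hheap.2 s a').mp hsa'.le)
  have hAnot : heapVtx ε a ∉ (SimpleGraph.Walk.toPath w).1.support := by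
    intro hmem
    obtain ⟨z, hz1, hz2, hz3⟩ := hw _ (SimpleGraph.Walk.support_toPath_subset w hmem)
    have hz3' : ε z = ε a := hz3
    rcases hmb.2.2 z ⟨(has.le.trans hz1), hz2.trans ha'b⟩ hz3' with h1 | h1
    · exact lt_irrefl _ (lt_of_lt_of_le has (h1 ▸ hz1 : s ≤ a))
    · have hab' : a' = b := le_antisymm ha'b (h1 ▸ hz2)
      exact ha'ne (by rw [hab']; exact hmb.2.1.symm)
  -- the explicit path through ε a
  have hsa : ε s ≠ ε a := hsS.2.1
  have e1 : (heapGraph C ε).Adj (heapVtx ε s) (heapVtx ε a) := by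
    rw [SimpleGraph.fromRel_adj]
    exact ⟨fun hh => hsa (congrArg Subtype.val hh), Or.inr hsS.2.2⟩
  have e2 : (heapGraph C ε).Adj (heapVtx ε a) (heapVtx ε a') := by
    rw [SimpleGraph.fromRel_adj]
    exact ⟨fun hh => ha'ne (congrArg Subtype.val hh).symm, Or.inl ha'C⟩
  set q : (heapGraph C ε).Walk (heapVtx ε s) (heapVtx ε a') :=
    SimpleGraph.Walk.cons e1 (SimpleGraph.Walk.cons e2 SimpleGraph.Walk.nil) with hq
  have hqpath : q.IsPath := by
    rw [SimpleGraph.Walk.isPath_def, hq]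
    simp only [SimpleGraph.Walk.support_cons, SimpleGraph.Walk.support_nil]
    refine List.nodup_cons.mpr ⟨?_, List.nodup_cons.mpr ⟨?_, List.nodup_singleton _⟩⟩
    · simp only [List.mem_cons, List.mem_singleton, List.not_mem_nil, or_false]
      rintro (hh | hh)
      · exact hsa (congrArg Subtype.val hh)
      · exact hsc (congrArg Subtype.val hh)
    · simp only [List.mem_singleton, List.not_mem_nil, or_false]
      intro hh
      exact ha'ne (congrArg Subtype.val hh).symm
  have hac : (heapGraph C ε).IsAcyclic := hacyclic
  have hpq := SimpleGraph.isAcyclic_iff_path_unique.mp hac (SimpleGraph.Walk.toPath w) ⟨q, hqpath⟩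
  apply hAnot
  rw [hpq]
  show heapVtx ε a ∈ q.support
  rw [hq]
  simp [SimpleGraph.Walk.support_cons]

end HeapAux

/-- Lemma 3.3.5: in a heap with acyclic concurrency subgraph, if [a, b] is a
minimal balanced subinterval, c ∈ S_{[a,b]}, and a' (resp. b') is the minimal
(resp. maximal) element of S_{[a,b]} with label ε c, then a < a' and b' < b are
covering relations in E. -/
theorem covBy_of_min_max_label {E P : Type*} [PartialOrder E] [Finite E]
    (C : P → P → Prop) (hrefl : Reflexive C) (hsymm : Symmetric C)
    (ε : E → P) (hheap : IsHeap C ε) (hacyclic : NoCircuits C ε)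
    (a b : E) (hmb : MinBalanced ε a b)
    (c : E) (hc : c ∈ intervalS C ε a b)
    (a' b' : E)
    (ha'mem : a' ∈ intervalS C ε a b) (ha'lab : ε a' = ε c)
    (ha'min : ∀ d ∈ intervalS C ε a b, ε d = ε c → a' ≤ d)
    (hb'mem : b' ∈ intervalS C ε a b) (hb'lab : ε b' = ε c)
    (hb'max : ∀ d ∈ intervalS C ε a b, ε d = ε c → d ≤ b') :
    a ⋖ a' ∧ b' ⋖ b := by
  constructor
  · exact heap_cov_half C ε hsymm hheap hacyclic a b hmb a' ha'mem
      (fun d hd hdl => ha'min d hd (hdl.trans ha'lab))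
  · -- dualize
    set ε' : Eᵒᵈ → P := fun x => ε (OrderDual.ofDual x) with hε'
    have hheap' : IsHeap C ε' := by
      constructor
      · intro α β h
        exact hheap.1 (OrderDual.ofDual β) (OrderDual.ofDual α) (hsymm h)
      · intro α β
        constructor
        · intro h
          have h1 : Relation.TransGen
              (fun x y : E => x ≤ y ∧ C (ε x) (ε y))
              (OrderDual.ofDual β) (OrderDual.ofDual α) :=
            (hheap.2 _ _).mp h
          have h2 : Relation.TransGen
              (Function.swap (fun x y : E => x ≤ y ∧ C (ε x) (ε y))) α β :=
            Relation.transGen_swap.mpr h1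
          exact Relation.TransGen.mono (α := Eᵒᵈ) (r := Function.swap (fun x y : E => x ≤ y ∧ C (ε x) (ε y)))
              (p := fun x y : Eᵒᵈ => x ≤ y ∧ C (ε' x) (ε' y)) (fun x y hh => ⟨hh.1, hsymm hh.2⟩) _ _ h2
        · intro h
          have h2 : Relation.TransGen
              (Function.swap (fun x y : E => x ≤ y ∧ C (ε x) (ε y))) α β :=
            Relation.TransGen.mono (α := Eᵒᵈ) (r := fun x y : Eᵒᵈ => x ≤ y ∧ C (ε' x) (ε' y))
              (p := Function.swap (fun x y : E => x ≤ y ∧ C (ε x) (ε y))) (fun x y hh => ⟨hh.1, hsymm hh.2⟩) _ _ h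
          exact (hheap.2 _ _).mpr (Relation.transGen_swap.mp h2)
    have hacyclic' : NoCircuits C ε' := hacyclic
    have hmb' : MinBalanced ε' (OrderDual.toDual b) (OrderDual.toDual a) := by
      refine ⟨hmb.1, hmb.2.1.symm, ?_⟩
      intro z hz hze
      rcases hmb.2.2 (OrderDual.ofDual z) ⟨hz.2, hz.1⟩ (hze.trans hmb.2.1.symm) with h | h
      · exact Or.inr h
      · exact Or.inl h
    have hb'mem' : OrderDual.toDual b' ∈
        intervalS C ε' (OrderDual.toDual b) (OrderDual.toDual a) := by
      refine ⟨⟨hb'mem.1.2, hb'mem.1.1⟩, ?_, ?_⟩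
      · intro hh
        exact hb'mem.2.1 (hh.trans hmb.2.1.symm)
      · have : C (ε a) (ε b') := hb'mem.2.2
        rw [show ε' (OrderDual.toDual b) = ε b from rfl]
        rw [← hmb.2.1]
        exact this
    have hb'min' : ∀ d ∈ intervalS C ε' (OrderDual.toDual b) (OrderDual.toDual a),
        ε' d = ε' (OrderDual.toDual b') → OrderDual.toDual b' ≤ d := by
      intro d hd hdl
      have hdmem : OrderDual.ofDual d ∈ intervalS C ε a b := by
        refine ⟨⟨hd.1.2, hd.1.1⟩, ?_, ?_⟩
        · intro hh
          exact hd.2.1 (hh.trans hmb.2.1)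
        · have : C (ε b) (ε (OrderDual.ofDual d)) := hd.2.2
          rw [hmb.2.1]
          exact this
      exact hb'max (OrderDual.ofDual d) hdmem (hdl.trans hb'lab)
    have h2 := heap_cov_half (E := Eᵒᵈ) C ε' hsymm hheap' hacyclic'
      (OrderDual.toDual b) (OrderDual.toDual a) hmb' (OrderDual.toDual b') hb'mem' hb'min'
    exact toDual_covBy_toDual_iff.mp h2
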